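/- Let $0 < \beta_j < 1/2$, $D_j \subset [0,(1-\beta_j)/\beta_j]$ finite with all pairwise distances exceeding 1, and $b(k) = \beta_1\cdots\beta_k$. Then $C_k = \{\sum_{j=1}^k d_j b(j) : d_j \in D_j\} + [0, b(k)]$, and the union over the tuples $(d_1,\dots,d_k)$ of the intervals $[\sum_{j=1}^k d_j b(j), b(k) + \sum_{j=1}^k d_j b(j)]$ is a disjoint union; hence $C_k$ is a union of exactly $m_1\cdots m_k$ pairwise disjoint closed intervals each of length $b(k)$, where $m_j = \#D_j$. -/

import Mathlib

/-- `iterComp β d k = f_{1,d 1} ∘ f_{2,d 2} ∘ ⋯ ∘ f_{k,d k}` where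
`f_{j,d}(x) = β_j (x + d)`. -/
def iterComp (β d : ℕ → ℝ) : ℕ → ℝ → ℝ
  | 0 => id
  | k + 1 => fun x => iterComp β d k (β (k + 1) * (x + d (k + 1)))

/-- The stage-`k` set `C_k = ⋃ f_{1,d_1}∘⋯∘f_{k,d_k}([0,1])`. -/
def stageSet (β : ℕ → ℝ) (D : ℕ → Finset ℝ) (k : ℕ) : Set ℝ :=
  ⋃ (d : ℕ → ℝ) (_ : ∀ j, d j ∈ D j), iterComp β d k '' Set.Icc 0 1

/-- The set of left endpoints `∑_{j=1}^k d_j b(j)` of the basic intervals of order `k`. -/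
def leftEndpoints (β : ℕ → ℝ) (D : ℕ → Finset ℝ) (k : ℕ) : Set ℝ :=
  {x | ∃ d : ℕ → ℝ, (∀ j, d j ∈ D j) ∧
    x = ∑ j ∈ Finset.Icc 1 k, d j * ∏ i ∈ Finset.Icc 1 j, β i}

noncomputable section StageAux

/-- `b(k) = β₁⋯β_k`. -/
def bprod (β : ℕ → ℝ) (k : ℕ) : ℝ := ∏ i ∈ Finset.Icc 1 k, β i

/-- `S(d,k) = ∑_{j=1}^k d_j b(j)`. -/
def ssum (β d : ℕ → ℝ) (k : ℕ) : ℝ := ∑ j ∈ Finset.Icc 1 k, d j * bprod β j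

lemma ssum_def (β d : ℕ → ℝ) (k : ℕ) :
    (∑ j ∈ Finset.Icc 1 k, d j * ∏ i ∈ Finset.Icc 1 j, β i) = ssum β d k := rfl

lemma bprod_pos (β : ℕ → ℝ) (hβ : ∀ j, 0 < β j) (k : ℕ) : 0 < bprod β k :=
  Finset.prod_pos fun i _ => hβ i

lemma bprod_succ (β : ℕ → ℝ) (k : ℕ) : bprod β (k+1) = bprod β k * β (k+1) :=
  Finset.prod_Icc_succ_top (Nat.succ_le_succ (Nat.zero_le k)) β

lemma ssum_succ (β d : ℕ → ℝ) (k : ℕ) :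
    ssum β d (k+1) = ssum β d k + d (k+1) * bprod β (k+1) :=
  Finset.sum_Icc_succ_top (Nat.succ_le_succ (Nat.zero_le k)) _

lemma iterComp_eq (β d : ℕ → ℝ) : ∀ (k : ℕ) (x : ℝ),
    iterComp β d k x = ssum β d k + bprod β k * x
  | 0, x => by simp [iterComp, ssum, bprod]
  | k+1, x => by
    show iterComp β d k (β (k+1) * (x + d (k+1))) = _
    rw [iterComp_eq β d k, ssum_succ, bprod_succ]
    ring

lemma image_affine (c b : ℝ) (hb : 0 < b) :
    (fun x => c + b * x) '' Set.Icc 0 1 = Set.Icc c (c + b) := by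
  ext y
  constructor
  · rintro ⟨x, ⟨hx0, hx1⟩, rfl⟩
    simp only
    constructor <;> nlinarith
  · rintro ⟨h1, h2⟩
    refine ⟨(y - c) / b, ⟨div_nonneg (by linarith) hb.le, ?_⟩, by field_simp; ring⟩
    rw [div_le_one hb]; linarith

lemma gap (β : ℕ → ℝ) (D : ℕ → Finset ℝ)
    (hβ : ∀ j, 0 < β j ∧ β j < 1 / 2)
    (hD : ∀ j, ∀ x ∈ D j, x ∈ Set.Icc (0 : ℝ) ((1 - β j) / β j))
    (hDsep : ∀ j, ∀ x ∈ D j, ∀ y ∈ D j, x ≠ y → 1 < |x - y|) :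
    ∀ (k : ℕ) (d d' : ℕ → ℝ), (∀ j, d j ∈ D j) → (∀ j, d' j ∈ D j) →
      (∃ j ∈ Finset.Icc 1 k, d j ≠ d' j) →
      bprod β k < |ssum β d k - ssum β d' k| := by
  intro k
  induction k with
  | zero => rintro d d' _ _ ⟨j, hj, _⟩; simp at hj
  | succ k ih =>
    intro d d' hd hd' hex
    have hb0 : 0 < β (k+1) := (hβ (k+1)).1
    have hbk : 0 < bprod β k := bprod_pos β (fun j => (hβ j).1) k
    have hbk1 : 0 < bprod β (k+1) := bprod_pos β (fun j => (hβ j).1) (k+1)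
    have hm1 := hD (k+1) _ (hd (k+1))
    have hm2 := hD (k+1) _ (hd' (k+1))
    have htail : |(d (k+1) - d' (k+1)) * bprod β (k+1)| ≤ bprod β k - bprod β (k+1) := by
      rw [abs_mul, abs_of_pos hbk1]
      have h1 : |d (k+1) - d' (k+1)| ≤ (1 - β (k+1)) / β (k+1) := by
        rw [abs_sub_le_iff]
        constructor
        · linarith [hm1.2, hm2.1]
        · linarith [hm2.2, hm1.1]
      have h2 : (1 - β (k+1)) / β (k+1) * bprod β (k+1) = bprod β k - bprod β (k+1) := by
        rw [bprod_succ]; field_simp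
      calc |d (k+1) - d' (k+1)| * bprod β (k+1)
          ≤ (1 - β (k+1)) / β (k+1) * bprod β (k+1) :=
            mul_le_mul_of_nonneg_right h1 hbk1.le
        _ = bprod β k - bprod β (k+1) := h2
    rw [ssum_succ, ssum_succ]
    have hre : ssum β d (k) + d (k+1) * bprod β (k+1) -
        (ssum β d' k + d' (k+1) * bprod β (k+1)) =
        (ssum β d k - ssum β d' k) + (d (k+1) - d' (k+1)) * bprod β (k+1) := by ring
    rw [hre]
    set A := ssum β d k - ssum β d' k with hA
    set B := (d (k+1) - d' (k+1)) * bprod β (k+1) with hB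
    by_cases hc : ∃ j ∈ Finset.Icc 1 k, d j ≠ d' j
    · have hIH := ih d d' hd hd' hc
      have habs : |A| ≤ |A + B| + |B| := by
        calc |A| = |(A + B) + (-B)| := by ring_nf
          _ ≤ |A + B| + |-B| := abs_add_le _ _
          _ = |A + B| + |B| := by rw [abs_neg]
      linarith
    · push_neg at hc
      have hA0 : A = 0 := by
        rw [hA, sub_eq_zero]
        exact Finset.sum_congr rfl fun j hj => by rw [hc j hj]
      have hne : d (k+1) ≠ d' (k+1) := by
        obtain ⟨j, hj, hjne⟩ := hex
        rw [Finset.mem_Icc] at hj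
        rcases Nat.lt_succ_iff_lt_or_eq.mp (Nat.lt_succ_of_le hj.2) with h | h
        · exact absurd (hc j (Finset.mem_Icc.mpr ⟨hj.1, Nat.lt_succ_iff.mp h⟩)) hjne
        · exact h ▸ hjne
      have hsep := hDsep (k+1) _ (hd (k+1)) _ (hd' (k+1)) hne
      rw [hA0, zero_add, hB, abs_mul, abs_of_pos hbk1]
      nlinarith

lemma ssum_ne_gap (β : ℕ → ℝ) (D : ℕ → Finset ℝ)
    (hβ : ∀ j, 0 < β j ∧ β j < 1 / 2)
    (hD : ∀ j, ∀ x ∈ D j, x ∈ Set.Icc (0 : ℝ) ((1 - β j) / β j))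
    (hDsep : ∀ j, ∀ x ∈ D j, ∀ y ∈ D j, x ≠ y → 1 < |x - y|)
    (k : ℕ) (d d' : ℕ → ℝ) (hd : ∀ j, d j ∈ D j) (hd' : ∀ j, d' j ∈ D j)
    (h : ssum β d k ≠ ssum β d' k) :
    bprod β k < |ssum β d k - ssum β d' k| := by
  apply gap β D hβ hD hDsep k d d' hd hd'
  by_contra h'
  push_neg at h'
  exact h (Finset.sum_congr rfl fun j hj => by rw [h' j hj])

/-- Finset version of the left endpoints, by recursion. -/
def Lfin (β : ℕ → ℝ) (D : ℕ → Finset ℝ) : ℕ → Finset ℝ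
  | 0 => {0}
  | k+1 => (Lfin β D k ×ˢ D (k+1)).image fun p => p.1 + p.2 * bprod β (k+1)

lemma leftEndpoints_eq_ssum (β : ℕ → ℝ) (D : ℕ → Finset ℝ) (k : ℕ) :
    leftEndpoints β D k = {x | ∃ d : ℕ → ℝ, (∀ j, d j ∈ D j) ∧ x = ssum β d k} := rfl

lemma leftEndpoints_eq_Lfin (β : ℕ → ℝ) (D : ℕ → Finset ℝ)
    (hne : ∀ j, (D j).Nonempty) :
    ∀ k, leftEndpoints β D k = ↑(Lfin β D k) := by
  intro k
  induction k with
  | zero =>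
    ext x
    simp only [leftEndpoints_eq_ssum, Set.mem_setOf_eq, Lfin, Finset.coe_singleton,
      Set.mem_singleton_iff]
    constructor
    · rintro ⟨d, _, rfl⟩; simp [ssum]
    · rintro rfl
      exact ⟨fun j => (hne j).choose, fun j => (hne j).choose_spec, by simp [ssum]⟩
  | succ k ih =>
    ext x
    simp only [leftEndpoints_eq_ssum, Set.mem_setOf_eq, Lfin, Finset.coe_image,
      Set.mem_image, Finset.mem_coe, Finset.mem_product]
    constructor
    · rintro ⟨d, hd, rfl⟩
      refine ⟨(ssum β d k, d (k+1)), ⟨?_, hd (k+1)⟩, (ssum_succ β d k).symm⟩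
      have : ssum β d k ∈ leftEndpoints β D k := ⟨d, hd, rfl⟩
      rwa [ih] at this
    · rintro ⟨⟨a, e⟩, ⟨ha, he⟩, rfl⟩
      have ha' : (a : ℝ) ∈ leftEndpoints β D k := by rw [ih]; exact ha
      obtain ⟨d, hd, rfl⟩ := ha'
      refine ⟨Function.update d (k+1) e, ?_, ?_⟩
      · intro j
        by_cases hj : j = k+1
        · subst hj; simpa using he
        · rw [Function.update_of_ne hj]; exact hd j
      · rw [ssum_succ]
        have h1 : ssum β (Function.update d (k+1) e) k = ssum β d k := by
          refine Finset.sum_congr rfl fun j hj => ?_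
          rw [Finset.mem_Icc] at hj
          rw [Function.update_of_ne (by omega)]
        rw [h1, Function.update_self]
        rfl

lemma Lfin_card (β : ℕ → ℝ) (D : ℕ → Finset ℝ)
    (hβ : ∀ j, 0 < β j ∧ β j < 1 / 2)
    (hD : ∀ j, ∀ x ∈ D j, x ∈ Set.Icc (0 : ℝ) ((1 - β j) / β j))
    (hDcard : ∀ j, 2 ≤ (D j).card)
    (hDsep : ∀ j, ∀ x ∈ D j, ∀ y ∈ D j, x ≠ y → 1 < |x - y|) :
    ∀ k, (Lfin β D k).card = ∏ j ∈ Finset.Icc 1 k, (D j).card := by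
  have hne : ∀ j, (D j).Nonempty := fun j =>
    Finset.card_pos.mp (lt_of_lt_of_le (by norm_num) (hDcard j))
  intro k
  induction k with
  | zero => simp [Lfin]
  | succ k ih =>
    have hbk : 0 < bprod β k := bprod_pos β (fun j => (hβ j).1) k
    have hbk1 : 0 < bprod β (k+1) := bprod_pos β (fun j => (hβ j).1) (k+1)
    have hinj : Set.InjOn (fun p : ℝ × ℝ => p.1 + p.2 * bprod β (k+1))
        ↑(Lfin β D k ×ˢ D (k+1)) := by
      rintro ⟨a, e⟩ hp ⟨a', e'⟩ hq h
      simp only [Finset.coe_product, Set.mem_prod, Finset.mem_coe] at hp hq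
      simp only at h
      have haL : (a : ℝ) ∈ leftEndpoints β D k := by
        rw [leftEndpoints_eq_Lfin β D hne]; exact hp.1
      have haL' : (a' : ℝ) ∈ leftEndpoints β D k := by
        rw [leftEndpoints_eq_Lfin β D hne]; exact hq.1
      obtain ⟨d, hd, rfl⟩ := haL
      obtain ⟨d', hd', rfl⟩ := haL'
      simp only [ssum_def] at h
      have hee : e = e' ∨ ssum β d k ≠ ssum β d' k := by
        by_cases h1 : ssum β d k = ssum β d' k
        · left
          have := h
          rw [h1] at this
          have : e * bprod β (k+1) = e' * bprod β (k+1) := by linarith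
          exact mul_right_cancel₀ (ne_of_gt hbk1) this
        · right; exact h1
      rcases hee with he | hne'
      · subst he
        have : ssum β d k = ssum β d' k := by linarith
        rw [Prod.mk.injEq]; exact ⟨this, rfl⟩
      · exfalso
        have hgap := ssum_ne_gap β D hβ hD hDsep k d d' hd hd' hne'
        -- |S - S'| = |e' - e| * b(k+1) ≤ ((1-β)/β) b(k+1) = b k - b(k+1) < b k
        have hm1 := hD (k+1) _ ((hq.2 : e' ∈ D (k+1)))
        have hm2 := hD (k+1) _ ((hp.2 : e ∈ D (k+1)))
        have hb0 : 0 < β (k+1) := (hβ (k+1)).1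
        have hdiff : ssum β d k - ssum β d' k = (e' - e) * bprod β (k+1) := by linarith
        have h1 : |e' - e| ≤ (1 - β (k+1)) / β (k+1) := by
          rw [abs_sub_le_iff]
          constructor
          · linarith [hm1.2, hm2.1]
          · linarith [hm2.2, hm1.1]
        have h2 : (1 - β (k+1)) / β (k+1) * bprod β (k+1) = bprod β k - bprod β (k+1) := by
          rw [bprod_succ]; field_simp
        rw [hdiff, abs_mul, abs_of_pos hbk1] at hgap
        nlinarith [mul_le_mul_of_nonneg_right h1 hbk1.le]
    have : (Lfin β D (k+1)).card = (Lfin β D k ×ˢ D (k+1)).card := by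
      show ((Lfin β D k ×ˢ D (k+1)).image _).card = _
      exact Finset.card_image_of_injOn hinj
    rw [this, Finset.card_product, ih,
      Finset.prod_Icc_succ_top (Nat.succ_le_succ (Nat.zero_le k))]

end StageAux

/-- `C_k` is the disjoint union of `m_1⋯m_k` closed intervals of length `b(k)`:
`C_k = ⋃_{x ∈ leftEndpoints} [x, x + b(k)]`, the intervals are pairwise disjoint,
and there are exactly `∏ (D j).card` of them. -/
theorem stage_set_structure (β : ℕ → ℝ) (D : ℕ → Finset ℝ) (k : ℕ)
    (hβ : ∀ j, 0 < β j ∧ β j < 1 / 2)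
    (hD : ∀ j, ∀ x ∈ D j, x ∈ Set.Icc (0 : ℝ) ((1 - β j) / β j))
    (hDcard : ∀ j, 2 ≤ (D j).card)
    (hDsep : ∀ j, ∀ x ∈ D j, ∀ y ∈ D j, x ≠ y → 1 < |x - y|) :
    stageSet β D k =
      ⋃ x ∈ leftEndpoints β D k, Set.Icc x (x + ∏ i ∈ Finset.Icc 1 k, β i) ∧
    (leftEndpoints β D k).Pairwise (fun x y =>
      Disjoint (Set.Icc x (x + ∏ i ∈ Finset.Icc 1 k, β i))
        (Set.Icc y (y + ∏ i ∈ Finset.Icc 1 k, β i))) ∧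
    (leftEndpoints β D k).ncard = ∏ j ∈ Finset.Icc 1 k, (D j).card := by
  have hbk : 0 < bprod β k := bprod_pos β (fun j => (hβ j).1) k
  have hne : ∀ j, (D j).Nonempty := fun j =>
    Finset.card_pos.mp (lt_of_lt_of_le (by norm_num) (hDcard j))
  have hprod : ∏ i ∈ Finset.Icc 1 k, β i = bprod β k := rfl
  have himg : ∀ d : ℕ → ℝ, iterComp β d k '' Set.Icc 0 1 =
      Set.Icc (ssum β d k) (ssum β d k + bprod β k) := by
    intro d
    have : iterComp β d k = fun x => ssum β d k + bprod β k * x :=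
      funext (iterComp_eq β d k)
    rw [this, image_affine _ _ hbk]
  refine ⟨?_, ?_, ?_⟩
  · ext y
    simp only [stageSet, Set.mem_iUnion, hprod]
    constructor
    · rintro ⟨d, hd, hy⟩
      rw [himg d] at hy
      exact ⟨ssum β d k, ⟨d, hd, rfl⟩, hy⟩
    · rintro ⟨x, hx, hy⟩
      obtain ⟨d, hd, rfl⟩ := hx
      exact ⟨d, hd, (himg d).symm ▸ hy⟩
  · intro x hx y hy hxy
    rw [hprod]
    obtain ⟨d, hd, rfl⟩ := hx
    obtain ⟨d', hd', rfl⟩ := hy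
    have hgap := ssum_ne_gap β D hβ hD hDsep k d d' hd hd' hxy
    simp only [ssum_def]
    rw [Set.disjoint_left]
    rintro z ⟨hz1, hz2⟩ ⟨hz3, hz4⟩
    rcases lt_abs.mp hgap with h | h
    · linarith
    · linarith
  · rw [leftEndpoints_eq_Lfin β D hne, Set.ncard_coe_finset,
      Lfin_card β D hβ hD hDcard hDsep]
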